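/- Let q be a prime power and let M be a simple and cosimple GF(q)-representable matroid that has two distinct k-loose elements. Then r(M) ≤ (q+1)(k-1) + 2q. -/

import Mathlib

namespace Matroid

variable {α : Type*}

/-- A circuit of a matroid is a minimal dependent set. -/
def Circuit (M : Matroid α) (C : Set α) : Prop :=
  M.Dep C ∧ ∀ D, D ⊂ C → M.Indep D

/-- A coloop is an element belonging to every basis. -/
def Coloop (M : Matroid α) (e : α) : Prop :=
  e ∈ M.E ∧ ∀ B, M.IsBase B → e ∈ B

/-- A matroid is simple if every subset of the ground set with at most two
elements is independent. -/
def Simple (M : Matroid α) : Prop :=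
  ∀ e ∈ M.E, ∀ f ∈ M.E, M.Indep {e, f}

/-- The rank of a matroid: the supremum of the cardinalities of its bases. -/
noncomputable def rk (M : Matroid α) : ℕ :=
  sSup {n | ∃ B, M.IsBase B ∧ B.ncard = n}

/-- A matroid is representable over a field `F` if independence in `M` coincides
with linear independence under some assignment of vectors to ground set elements. -/
def RepresentableOver (M : Matroid α) (F : Type) [Field F] : Prop :=
  ∃ (n : ℕ) (φ : α → (Fin n → F)),
    ∀ I, I ⊆ M.E → (M.Indep I ↔ LinearIndependent F (fun x : I => φ x))

/-- An element `e` is `k`-loose if every circuit containing `e` has size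
greater than `r - k`, where `r` is the rank of the matroid. -/
def KLoose (M : Matroid α) (k : ℕ) (e : α) : Prop :=
  e ∈ M.E ∧ ∀ C, M.Circuit C → e ∈ C → M.rk - k < C.ncard

/-- A matroid is `k`-paving if every element is `k`-loose. -/
def KPaving (M : Matroid α) (k : ℕ) : Prop :=
  ∀ e ∈ M.E, M.KLoose k e

end Matroid

namespace Matroid

variable {α : Type*}

theorem exists_circuit_subset_aux (M : Matroid α) :
    ∀ (m : ℕ) (D : Set α), D.ncard ≤ m → D.Finite → M.Dep D → ∃ C, C ⊆ D ∧ M.Circuit C := by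
  intro m
  induction m with
  | zero =>
    intro D hcard hfin hdep
    have hD : D = ∅ := (Set.ncard_eq_zero hfin).mp (Nat.le_zero.mp hcard)
    subst hD
    exact absurd M.empty_indep hdep.not_indep
  | succ m ih =>
    intro D hcard hfin hdep
    by_cases h : ∀ D', D' ⊂ D → M.Indep D'
    · exact ⟨D, subset_rfl, hdep, h⟩
    · push_neg at h
      obtain ⟨D', hss, hni⟩ := h
      have hD'E : D' ⊆ M.E := hss.subset.trans hdep.subset_ground
      have hdep' : M.Dep D' := ⟨hni, hD'E⟩
      have hlt : D'.ncard < D.ncard := Set.ncard_lt_ncard hss hfin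
      obtain ⟨C, hCD, hC⟩ := ih D' (by omega) (hfin.subset hss.subset) hdep'
      exact ⟨C, hCD.trans hss.subset, hC⟩

theorem exists_circuit_subset (M : Matroid α) {D : Set α} (hfin : D.Finite) (hdep : M.Dep D) :
    ∃ C, C ⊆ D ∧ M.Circuit C :=
  M.exists_circuit_subset_aux D.ncard D le_rfl hfin hdep

end Matroid

/-- A simple and cosimple `GF(q)`-representable matroid with two distinct `k`-loose
elements has rank at most `(q+1)(k-1) + 2q`. -/
theorem rank_bound_cosimple {α : Type*} (q k : ℕ) (hq : IsPrimePow q)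
    (F : Type) [Field F] [Fintype F] (hF : Fintype.card F = q)
    (M : Matroid α) [M.Finite] (hsimple : M.Simple) (hcosimple : M✶.Simple)
    (hrep : M.RepresentableOver F)
    (e f : α) (hef : e ≠ f) (he : M.KLoose k e) (hf : M.KLoose k f) :
    (M.rk : ℤ) ≤ (q + 1) * (k - 1) + 2 * q := by
  classical
  have hq2 : 2 ≤ q := hq.two_le
  obtain ⟨n, φ, hφ⟩ := hrep
  have hEfin : M.E.Finite := M.ground_finite
  -- a base avoiding e and f, from cosimplicity
  have heE : e ∈ M.E := he.1
  have hfE : f ∈ M.E := hf.1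
  have hco : M✶.Indep {e, f} := by
    have h1 : e ∈ M✶.E := by rwa [Matroid.dual_ground]
    have h2 : f ∈ M✶.E := by rwa [Matroid.dual_ground]
    exact hcosimple e h1 f h2
  obtain ⟨hsubE, B, hB, hdisj⟩ := Matroid.dual_indep_iff_exists'.mp hco
  have hBE : B ⊆ M.E := hB.subset_ground
  have hBfin : B.Finite := hEfin.subset hBE
  have heB : e ∉ B := Set.disjoint_left.mp hdisj (by simp)
  have hfB : f ∉ B := Set.disjoint_left.mp hdisj (by simp)
  -- linear independence of the base family
  have hLIB : LinearIndependent F (fun x : B => φ x) := (hφ B hBE).mp hB.indep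
  have hLIB' : ∀ l : α →₀ F, ↑l.support ⊆ B → Finsupp.linearCombination F φ l = 0 → l = 0 := by
    intro l hl htot
    exact linearIndepOn_iff.mp hLIB l ((Finsupp.mem_supported F l).mpr hl) htot
  -- dependent sets from linear relations
  have dep_of_rel : ∀ (D : Set α), D ⊆ M.E → ∀ l : α →₀ F, ↑l.support ⊆ D → l ≠ 0 →
      Finsupp.linearCombination F φ l = 0 → M.Dep D := by
    intro D hDE l hsupp hlne htot
    refine ⟨fun hind => hlne ?_, hDE⟩
    have hli : LinearIndependent F (fun x : D => φ x) := (hφ D hDE).mp hind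
    exact linearIndepOn_iff.mp hli l ((Finsupp.mem_supported F l).mpr hsupp) htot
  -- representing a non-base element over the base
  have hrepr : ∀ g ∈ M.E, g ∉ B → ∃ c : α →₀ F, ↑c.support ⊆ B ∧
      Finsupp.linearCombination F φ c = φ g := by
    intro g hgE hgB
    have hdep : M.Dep (insert g B) := hB.insert_dep ⟨hgE, hgB⟩
    have hnli : ¬ LinearIndependent F (fun x : (insert g B : Set α) => φ x) := by
      intro h
      exact hdep.not_indep ((hφ _ (Set.insert_subset hgE hBE)).mpr h)
    rw [show (fun x : (insert g B : Set α) => φ x) = (φ ∘ (↑)) from rfl,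
      linearIndependent_comp_subtype_iff, linearIndepOn_iff] at hnli
    push_neg at hnli
    obtain ⟨l, hlsup, hltot, hlne⟩ := hnli
    have hlsup' : ↑l.support ⊆ insert g B := (Finsupp.mem_supported F l).mp hlsup
    have hlg : l g ≠ 0 := by
      intro h0
      apply hlne
      apply hLIB'
      · intro x hx
        have hx' : (x : α) ∈ insert g B := hlsup' hx
        rcases hx' with h | h
        · exfalso; rw [Finset.mem_coe, Finsupp.mem_support_iff] at hx; rw [h] at hx; exact hx h0
        · exact h
      · exact hltot
    refine ⟨(-(l g)⁻¹) • l.erase g, ?_, ?_⟩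
    · intro x hx
      have hx1 : x ∈ (l.erase g).support := Finset.mem_of_subset Finsupp.support_smul hx
      rw [Finsupp.support_erase, Finset.mem_erase] at hx1
      rcases hlsup' hx1.2 with h | h
      · exact absurd h hx1.1
      · exact h
    · have hsplit : Finsupp.single g (l g) + l.erase g = l := Finsupp.single_add_erase g l
      have h1 : Finsupp.linearCombination F φ (l.erase g) = -(l g) • φ g := by
        have := congrArg (Finsupp.linearCombination F φ) hsplit
        rw [map_add, Finsupp.linearCombination_single, hltot] at this
        have h2 : Finsupp.linearCombination F φ (l.erase g) = -(l g • φ g) :=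
          eq_neg_of_add_eq_zero_right this
        rw [h2, neg_smul]
      rw [map_smul, h1, smul_smul]
      have : (-(l g)⁻¹) * (-(l g)) = 1 := by
        rw [neg_mul_neg, inv_mul_cancel₀ hlg]
      rw [this, one_smul]
  obtain ⟨u, husupp, hutot⟩ := hrepr e heE heB
  obtain ⟨w, hwsupp, hwtot⟩ := hrepr f hfE hfB
  -- key bounds from circuits
  have keybound : ∀ (g : α), M.KLoose k g → g ∉ B → ∀ S : Finset α, ↑S ⊆ B →
      M.Dep (insert g ↑S) → M.rk ≤ k + S.card := by
    intro g hg hgB S hSB hdep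
    have hDfin : (insert g (↑S : Set α)).Finite := (S.finite_toSet).insert g
    obtain ⟨C, hCD, hC⟩ := M.exists_circuit_subset hDfin hdep
    have hgC : g ∈ C := by
      by_contra hgC
      have hCB : C ⊆ B := by
        intro x hx
        rcases hCD hx with h | h
        · exact absurd (h ▸ hx) hgC
        · exact hSB h
      exact hC.1.not_indep (hB.indep.subset hCB)
    have h1 : M.rk - k < C.ncard := hg.2 C hC hgC
    have h2 : C.ncard ≤ S.card + 1 := by
      calc C.ncard ≤ (insert g (↑S : Set α)).ncard := Set.ncard_le_ncard hCD hDfin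
        _ ≤ (↑S : Set α).ncard + 1 := Set.ncard_insert_le g _
        _ = S.card + 1 := by rw [Set.ncard_coe_finset]
    omega
  have keybound2 : ∀ S : Finset α, ↑S ⊆ B → M.Dep ({e, f} ∪ ↑S) → M.rk ≤ k + 1 + S.card := by
    intro S hSB hdep
    have hDfin : ({e, f} ∪ (↑S : Set α)).Finite :=
      ((Set.finite_singleton f).insert e).union (S.finite_toSet)
    obtain ⟨C, hCD, hC⟩ := M.exists_circuit_subset hDfin hdep
    have hCef : e ∈ C ∨ f ∈ C := by
      by_contra hcon
      push_neg at hcon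
      have hCB : C ⊆ B := by
        intro x hx
        rcases hCD hx with h | h
        · rcases h with h | h
          · exact absurd (h ▸ hx) hcon.1
          · exact absurd ((Set.mem_singleton_iff.mp h) ▸ hx) hcon.2
        · exact hSB h
      exact hC.1.not_indep (hB.indep.subset hCB)
    have h1 : M.rk - k < C.ncard := by
      rcases hCef with h | h
      · exact he.2 C hC h
      · exact hf.2 C hC h
    have h2 : C.ncard ≤ S.card + 2 := by
      have hrw : ({e, f} ∪ (↑S : Set α)) = insert e (insert f ↑S) := by
        rw [Set.insert_union, Set.singleton_union]
      calc C.ncard ≤ ({e, f} ∪ (↑S : Set α)).ncard := Set.ncard_le_ncard hCD hDfin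
        _ = (insert e (insert f (↑S : Set α))).ncard := by rw [hrw]
        _ ≤ (insert f (↑S : Set α)).ncard + 1 := Set.ncard_insert_le _ _
        _ ≤ (↑S : Set α).ncard + 1 + 1 := by
            have := Set.ncard_insert_le f (↑S : Set α); omega
        _ = S.card + 2 := by rw [Set.ncard_coe_finset]
    omega
  -- the three dependent-set constructions
  have depe : M.Dep (insert e ↑(u.support)) := by
    apply dep_of_rel _ (Set.insert_subset heE (husupp.trans hBE)) (Finsupp.single e 1 - u)
    · intro x hx
      have hx' : x ∈ (Finsupp.single e (1 : F)).support ∪ u.support :=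
        Finset.mem_of_subset Finsupp.support_sub hx
      rcases Finset.mem_union.mp hx' with h | h
      · have := Finsupp.support_single_subset h
        simp only [Finset.mem_singleton] at this
        exact this ▸ Set.mem_insert _ _
      · exact Set.mem_insert_of_mem _ h
    · intro h0
      have : (Finsupp.single e (1 : F) - u) e = 0 := by rw [h0]; rfl
      rw [Finsupp.sub_apply, Finsupp.single_eq_same] at this
      have hue : u e = 0 := Finsupp.notMem_support_iff.mp (fun hc => heB (husupp hc))
      rw [hue, sub_zero] at this
      exact one_ne_zero this
    · rw [map_sub, Finsupp.linearCombination_single, one_smul, hutot, sub_self]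
  have depf : M.Dep (insert f ↑(w.support)) := by
    apply dep_of_rel _ (Set.insert_subset hfE (hwsupp.trans hBE)) (Finsupp.single f 1 - w)
    · intro x hx
      have hx' : x ∈ (Finsupp.single f (1 : F)).support ∪ w.support :=
        Finset.mem_of_subset Finsupp.support_sub hx
      rcases Finset.mem_union.mp hx' with h | h
      · have := Finsupp.support_single_subset h
        simp only [Finset.mem_singleton] at this
        exact this ▸ Set.mem_insert _ _
      · exact Set.mem_insert_of_mem _ h
    · intro h0
      have : (Finsupp.single f (1 : F) - w) f = 0 := by rw [h0]; rfl
      rw [Finsupp.sub_apply, Finsupp.single_eq_same] at this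
      have hwf : w f = 0 := Finsupp.notMem_support_iff.mp (fun hc => hfB (hwsupp hc))
      rw [hwf, sub_zero] at this
      exact one_ne_zero this
    · rw [map_sub, Finsupp.linearCombination_single, one_smul, hwtot, sub_self]
  have hsuppl : ∀ l : F, ↑(u + l • w).support ⊆ B := by
    intro l x hx
    have hx' : x ∈ u.support ∪ (l • w).support :=
      Finset.mem_of_subset Finsupp.support_add hx
    rcases Finset.mem_union.mp hx' with h | h
    · exact husupp h
    · exact hwsupp (Finset.mem_of_subset Finsupp.support_smul h)
  have depl : ∀ l : F, l ≠ 0 → M.Dep ({e, f} ∪ ↑((u + l • w).support)) := by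
    intro l hl
    apply dep_of_rel _ ?_ (Finsupp.single e 1 + Finsupp.single f l - (u + l • w))
    · intro x hx
      have hx' : x ∈ (Finsupp.single e (1 : F) + Finsupp.single f l).support ∪
          (u + l • w).support := Finset.mem_of_subset Finsupp.support_sub hx
      rcases Finset.mem_union.mp hx' with h | h
      · have h2 : x ∈ (Finsupp.single e (1 : F)).support ∪ (Finsupp.single f l).support :=
          Finset.mem_of_subset Finsupp.support_add h
        rcases Finset.mem_union.mp h2 with h3 | h3
        · have := Finsupp.support_single_subset h3
          simp only [Finset.mem_singleton] at this
          exact Or.inl (Or.inl this)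
        · have := Finsupp.support_single_subset h3
          simp only [Finset.mem_singleton] at this
          exact Or.inl (Or.inr this)
      · exact Or.inr h
    · intro h0
      have heval : (Finsupp.single e (1 : F) + Finsupp.single f l - (u + l • w)) e = 0 := by
        rw [h0]; rfl
      have hue : (u + l • w) e = 0 :=
        Finsupp.notMem_support_iff.mp (fun hc => heB (hsuppl l hc))
      rw [Finsupp.sub_apply, Finsupp.add_apply, Finsupp.single_eq_same, hue,
        Finsupp.single_eq_of_ne' (Ne.symm hef), sub_zero, add_zero] at heval
      exact one_ne_zero heval
    · rw [map_sub, map_add, map_add, map_smul, Finsupp.linearCombination_single, one_smul,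
        Finsupp.linearCombination_single, hutot, hwtot, sub_self]
    · refine Set.union_subset ?_ ((hsuppl l).trans hBE)
      intro x hx
      rcases hx with h | h
      · exact h ▸ heE
      · exact (Set.mem_singleton_iff.mp h) ▸ hfE
  -- the per-member rank inequalities
  have hIe : M.rk ≤ k + u.support.card := keybound e he heB u.support husupp depe
  have hIf : M.rk ≤ k + w.support.card := keybound f hf hfB w.support hwsupp depf
  have hIl : ∀ l : F, l ≠ 0 → M.rk ≤ k + 1 + (u + l • w).support.card := by
    intro l hl
    exact keybound2 (u + l • w).support (hsuppl l) (depl l hl)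
  -- counting: total support cardinality is at most q * rk
  set Bf : Finset α := hBfin.toFinset with hBf_def
  have hBfcard : Bf.card = M.rk := by
    have h1 : M.rk = B.ncard := by
      have hset : {m : ℕ | ∃ B', M.IsBase B' ∧ B'.ncard = m} = {B.ncard} := by
        ext m
        simp only [Set.mem_setOf_eq, Set.mem_singleton_iff]
        constructor
        · rintro ⟨B', hB', rfl⟩; exact hB'.ncard_eq_ncard_of_isBase hB
        · rintro rfl; exact ⟨B, hB, rfl⟩
      show sSup {m : ℕ | ∃ B', M.IsBase B' ∧ B'.ncard = m} = B.ncard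
      rw [hset, csSup_singleton]
    rw [h1, Set.ncard_eq_toFinset_card B hBfin]
  have hcardrw : ∀ c : α →₀ F, ↑c.support ⊆ B →
      c.support.card = ∑ i ∈ Bf, (if c i ≠ 0 then 1 else 0) := by
    intro c hc
    rw [← Finset.card_filter]
    congr 1
    ext i
    simp only [Finset.mem_filter, Finsupp.mem_support_iff]
    constructor
    · intro hi
      exact ⟨hBfin.mem_toFinset.mpr (hc (Finsupp.mem_support_iff.mpr hi)), hi⟩
    · exact fun h => h.2
  have hcount : (∑ l : F, (u + l • w).support.card) + w.support.card ≤ q * M.rk := by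
    have hper : ∀ i ∈ Bf,
        (∑ l : F, (if (u + l • w) i ≠ 0 then 1 else 0)) + (if w i ≠ 0 then 1 else 0) ≤ q := by
      intro i _
      simp only [Finsupp.add_apply, Finsupp.smul_apply, smul_eq_mul]
      by_cases hwi : w i = 0
      · simp only [hwi, mul_zero, add_zero, ne_eq, not_true_eq_false, if_false]
        by_cases hui : u i = 0
        · simp [hui]
        · simp only [hui, not_false_eq_true, if_true, Finset.sum_const, Finset.card_univ,
            smul_eq_mul, mul_one, hF, le_refl]
      · have hsub : Finset.univ.filter (fun l : F => u i + l * w i ≠ 0) ⊆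
            Finset.univ.erase (-(u i) / w i) := by
          intro l hl
          rw [Finset.mem_erase]
          refine ⟨?_, Finset.mem_univ _⟩
          rintro rfl
          apply (Finset.mem_filter.mp hl).2
          rw [div_mul_cancel₀ _ hwi]
          ring
        have hc1 : (Finset.univ.filter (fun l : F => u i + l * w i ≠ 0)).card ≤ q - 1 := by
          calc (Finset.univ.filter (fun l : F => u i + l * w i ≠ 0)).card
              ≤ (Finset.univ.erase (-(u i) / w i)).card := Finset.card_le_card hsub
            _ = Fintype.card F - 1 := by rw [Finset.card_erase_of_mem (Finset.mem_univ _),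
                Finset.card_univ]
            _ = q - 1 := by rw [hF]
        erw [← Finset.card_filter]
        have h2 : (if w i ≠ 0 then 1 else 0) = 1 := if_pos hwi
        rw [h2]
        omega
    have hrw1 : (∑ l : F, (u + l • w).support.card) + w.support.card =
        ∑ i ∈ Bf, ((∑ l : F, (if (u + l • w) i ≠ 0 then 1 else 0)) +
          (if w i ≠ 0 then 1 else 0)) := by
      rw [Finset.sum_add_distrib, ← Finset.sum_comm]
      congr 1
      · exact Finset.sum_congr rfl (fun l _ => hcardrw _ (hsuppl l))
      · exact hcardrw w hwsupp
    rw [hrw1]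
    calc ∑ i ∈ Bf, ((∑ l : F, (if (u + l • w) i ≠ 0 then 1 else 0)) +
          (if w i ≠ 0 then 1 else 0)) ≤ ∑ _i ∈ Bf, q := Finset.sum_le_sum hper
      _ = Bf.card * q := by rw [Finset.sum_const, smul_eq_mul]
      _ = q * M.rk := by rw [hBfcard, mul_comm]
  -- summing the per-member inequalities
  have hA : ∀ l : F, M.rk + (if l = (0 : F) then 1 else 0) ≤
      (k + 1) + (u + l • w).support.card := by
    intro l
    by_cases hl : l = 0
    · subst hl
      rw [if_pos rfl, zero_smul, add_zero]
      omega
    · simp only [if_neg hl, add_zero]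
      exact hIl l hl
  have hsumA : q * M.rk + 1 ≤ q * k + q + ∑ l : F, (u + l • w).support.card := by
    have h1 := Finset.sum_le_sum (fun l (_ : l ∈ (Finset.univ : Finset F)) => hA l)
    rw [Finset.sum_add_distrib, Finset.sum_add_distrib] at h1
    simp only [Finset.sum_const, Finset.card_univ, smul_eq_mul, mul_one, hF] at h1
    have h2 : (∑ l : F, (if l = (0 : F) then 1 else 0)) = 1 := by
      rw [Finset.sum_ite_eq' Finset.univ (0 : F) (fun _ => 1)]
      simp
    rw [h2] at h1
    rw [show q * k + q = q * (k + 1) by ring]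
    exact h1
  -- combine everything
  have hfinal : M.rk + 1 ≤ q * k + k + q := by
    have h1 := hsumA
    have h2 := hcount
    have h3 := hIf
    generalize hS : (∑ l : F, (u + l • w).support.card) = S at h1 h2
    generalize hW : w.support.card = W at h2 h3
    generalize hP : q * M.rk = P at h1 h2
    generalize hQ : q * k = Q at h1 ⊢
    omega
  have hcast : (M.rk : ℤ) + 1 ≤ (q : ℤ) * k + k + q := by exact_mod_cast hfinal
  have hring : ((q : ℤ) + 1) * ((k : ℤ) - 1) + 2 * q = (q : ℤ) * k + k + q - 1 := by ring
  rw [hring]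
  linarith
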